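/- Let a > 0 and D ≥ 0 be real numbers, and let z be a point of the upper half-plane ℍ with dist_ℍ(z, i·a) ≤ D. Then |exp(i·z)| ≤ exp(−a·e^{−D}). Equivalently, setting β = e^{−a} ∈ (0,1), one has |exp(i·z)| ≤ β^{e^{−D}}. -/

import Mathlib

open UpperHalfPlane

/-- Upper half-plane form of Lemma 1: if `z ∈ ℍ` is at hyperbolic distance at most `D`
from `i·a`, then `|exp(i·z)| ≤ exp(-a·e^{-D})`; equivalently, with `β = e^{-a}`,
`|exp(i·z)| ≤ β^{e^{-D}}`. -/
theorem abs_exp_le_of_dist_le (a D : ℝ) (ha : 0 < a) (hD : 0 ≤ D)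
    (z : UpperHalfPlane)
    (hz : dist z (⟨Complex.I * a, by simpa using ha⟩ : UpperHalfPlane) ≤ D) :
    ‖Complex.exp (Complex.I * z)‖ ≤ Real.exp (-(a * Real.exp (-D))) ∧
    ‖Complex.exp (Complex.I * z)‖ ≤ (Real.exp (-a)) ^ (Real.exp (-D)) := by
  set w : UpperHalfPlane := ⟨Complex.I * a, by simpa using ha⟩
  have hwim : w.im = a := by
    simp [UpperHalfPlane.im, w]
  have hlog : dist (Real.log z.im) (Real.log w.im) ≤ D :=
    (UpperHalfPlane.dist_log_im_le z w).trans hz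
  have h1 : Real.log a - D ≤ Real.log z.im := by
    rw [hwim] at hlog
    have := abs_sub_le_iff.mp (Real.dist_eq _ _ ▸ hlog)
    linarith [this.2]
  have him : a * Real.exp (-D) ≤ z.im := by
    have := Real.exp_le_exp.mpr h1
    rw [Real.exp_sub, Real.exp_log ha, Real.exp_log z.im_pos] at this
    rw [Real.exp_neg, ← div_eq_mul_inv]
    exact this
  have habs : ‖Complex.exp (Complex.I * z)‖ = Real.exp (-z.im) := by
    rw [Complex.norm_exp]
    congr 1
    simp
  have key : ‖Complex.exp (Complex.I * z)‖ ≤ Real.exp (-(a * Real.exp (-D))) := by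
    rw [habs]
    exact Real.exp_le_exp.mpr (by linarith)
  refine ⟨key, ?_⟩
  rwa [← Real.exp_mul, neg_mul]
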